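/- Let K be a number field with ring of integers O_K, 𝔫 a nonzero ideal, and 𝔪 an ideal dividing 𝔫. Define φ_k(𝔫, 𝔪) as the number of k-tuples (a₁,…,a_k) of units of O_K/𝔫 whose sum a₁+⋯+a_k maps to a unit of O_K/𝔪. Then for k ≥ 2, φ_k(𝔫, 𝔪) = φ(𝔫) · ∑_{𝔡 | 𝔪} μ(𝔡)/φ(𝔡) · φ_{k−1}(𝔫, 𝔡), where μ is the Möbius function on nonzero ideals of O_K. -/

import Mathlib

open NumberField

set_option synthInstance.maxHeartbeats 1000000
set_option maxHeartbeats 1000000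

open Classical in
/-- The Möbius function on nonzero ideals of `𝓞 K`: `μ(𝓞 K) = 1`, `μ` of a
product of `t` distinct prime ideals is `(−1)^t`, and `μ` is `0` otherwise. -/
noncomputable def idealMoebius (K : Type*) [Field K] [NumberField K]
    (I : Ideal (𝓞 K)) : ℤ :=
  if I = ⊤ then 1
  else if Squarefree I then (-1) ^ (UniqueFactorizationMonoid.factors I).toFinset.card
  else 0

/-- `φ_k(𝔫, 𝔪)`: the number of `k`-tuples of units of `𝓞 K ⧸ 𝔫` whose sum maps to
a unit of `𝓞 K ⧸ 𝔪`. -/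
noncomputable def phiPairIdeal (K : Type*) [Field K] [NumberField K]
    (k : ℕ) (𝔫 𝔪 : Ideal (𝓞 K)) : ℕ :=
  Nat.card {v : Fin k → (𝓞 K ⧸ 𝔫)ˣ //
    ∀ y : 𝓞 K, Ideal.Quotient.mk 𝔫 y = ∑ i, (v i : 𝓞 K ⧸ 𝔫) →
      IsUnit (Ideal.Quotient.mk 𝔪 y)}

namespace PhiAux

open UniqueFactorizationMonoid

theorem card_fiber_mul {G H : Type*} [Group G] [Group H] [Finite G] [Finite H]
    (g : G →* H) (hg : Function.Surjective g) (w : H) :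
    Nat.card {u : G // g u = w} * Nat.card H = Nat.card G := by
  obtain ⟨u₀, hu₀⟩ := hg w
  have e : {u : G // g u = w} ≃ MonoidHom.ker g :=
  { toFun := fun u => ⟨u.1 * u₀⁻¹, by
      rw [MonoidHom.mem_ker, map_mul, map_inv, u.2, hu₀, mul_inv_cancel]⟩
    invFun := fun v => ⟨v.1 * u₀, by
      rw [map_mul, show g v.1 = 1 from MonoidHom.mem_ker.1 v.2, hu₀, one_mul]⟩
    left_inv := fun u => by simp
    right_inv := fun v => by simp }
  rw [Nat.card_congr e,
    Subgroup.card_eq_card_quotient_mul_card_subgroup (MonoidHom.ker g),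
    Nat.card_congr (QuotientGroup.quotientKerEquivOfSurjective g hg).toEquiv]
  ring

section Dedekind

variable {R : Type*} [CommRing R] [IsDedekindDomain R]

theorem isUnit_mk_iff (J : Ideal R) (y : R) :
    IsUnit (Ideal.Quotient.mk J y) ↔ J ⊔ Ideal.span {y} = ⊤ := by
  constructor
  · rintro ⟨u, hu⟩
    obtain ⟨z, hz⟩ := Ideal.Quotient.mk_surjective (↑u⁻¹ : R ⧸ J)
    rw [Ideal.eq_top_iff_one, Submodule.mem_sup]
    have h1 : y * z - 1 ∈ J := by
      rw [← Ideal.Quotient.eq_zero_iff_mem, map_sub, map_mul, map_one, hz, ← hu, u.mul_inv,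
        sub_self]
    exact ⟨-(y*z-1), neg_mem h1, y*z, Ideal.mem_span_singleton.2 ⟨z, rfl⟩, by ring⟩
  · intro h
    rw [Ideal.eq_top_iff_one, Submodule.mem_sup] at h
    obtain ⟨a, ha, b, hb, hab⟩ := h
    obtain ⟨z, rfl⟩ := Ideal.mem_span_singleton.1 hb
    refine IsUnit.of_mul_eq_one (Ideal.Quotient.mk J z) ?_
    rw [← map_mul, ← sub_eq_zero, ← map_one (Ideal.Quotient.mk J), ← map_sub,
      Ideal.Quotient.eq_zero_iff_mem]
    have : y * z - 1 = -a := by rw [← hab]; ring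
    rw [this]; exact neg_mem ha

open Classical in
theorem exists_unit_lift (𝔫 𝔡 : Ideal R) (h𝔫 : 𝔫 ≠ ⊥) (h : 𝔫 ≤ 𝔡) (a : R)
    (ha : IsUnit (Ideal.Quotient.mk 𝔡 a)) :
    ∃ b : R, IsUnit (Ideal.Quotient.mk 𝔫 b) ∧ Ideal.Quotient.mk 𝔡 b = Ideal.Quotient.mk 𝔡 a := by
  have h𝔫0 : 𝔫 ≠ 0 := h𝔫
  set S : Finset (Ideal R) :=
    (normalizedFactors 𝔫).toFinset.filter (fun 𝔭 => ¬ 𝔡 ≤ 𝔭) with hS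
  set Q : Ideal R := S.prod id with hQ
  have hQd : 𝔡 ⊔ Q = ⊤ := by
    by_contra hne
    obtain ⟨M, hM, hle⟩ := Ideal.exists_le_maximal _ hne
    have hMne : M ≠ ⊥ := fun hbot =>
      h𝔫 (le_bot_iff.1 (hbot ▸ le_trans h (le_trans le_sup_left hle)))
    have hMp : Prime M := Ideal.prime_of_isPrime hMne hM.isPrime
    obtain ⟨𝔭, h𝔭S, hM𝔭⟩ :=
      hMp.exists_mem_finset_dvd (Ideal.dvd_iff_le.2 (le_trans le_sup_right hle))
    have h𝔭 : Prime (𝔭 : Ideal R) := by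
      have := (Finset.mem_filter.1 h𝔭S).1
      rw [Multiset.mem_toFinset, mem_normalizedFactors_iff h𝔫0] at this
      exact this.1
    have h𝔭max : (𝔭 : Ideal R).IsMaximal :=
      Ideal.IsPrime.isMaximal (Ideal.isPrime_of_prime h𝔭) h𝔭.ne_zero
    have hMeq : M = 𝔭 := by
      have h𝔭leM : 𝔭 ≤ M := Ideal.le_of_dvd hM𝔭
      exact (h𝔭max.eq_of_le hM.ne_top h𝔭leM).symm
    exact (Finset.mem_filter.1 h𝔭S).2 (hMeq ▸ le_trans le_sup_left hle)
  obtain ⟨j, hj, q, hq, hjq⟩ := Submodule.mem_sup.1 (hQd ▸ Submodule.mem_top : (1:R) ∈ 𝔡 ⊔ Q)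
  refine ⟨a * q + j, ?_, ?_⟩
  · rw [isUnit_mk_iff]
    by_contra hne
    obtain ⟨M, hM, hle⟩ := Ideal.exists_le_maximal _ hne
    have h𝔫M : 𝔫 ≤ M := le_trans le_sup_left hle
    have hbM : a * q + j ∈ M := hle (le_sup_right (α := Ideal R) (Ideal.subset_span rfl))
    have h1M : (1:R) ∉ M := fun h1 => hM.ne_top ((Ideal.eq_top_iff_one M).2 h1)
    by_cases hdM : 𝔡 ≤ M
    · have hjM : j ∈ M := hdM hj
      have haq : a * q ∈ M := by
        have := M.sub_mem hbM hjM; simpa using this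
      rcases hM.isPrime.mem_or_mem haq with haM | hqM
      · rw [isUnit_mk_iff] at ha
        have : (⊤ : Ideal R) ≤ M := by
          rw [← ha]; exact sup_le hdM ((Ideal.span_le).2 (by simpa using haM))
        exact hM.ne_top (top_le_iff.1 this)
      · exact h1M (hjq ▸ M.add_mem hjM hqM)
    · have hMS : M ∈ S := by
        rw [hS, Finset.mem_filter, Multiset.mem_toFinset, mem_normalizedFactors_iff h𝔫0]
        have hMne : M ≠ ⊥ := fun hbot => h𝔫 (le_bot_iff.1 (hbot ▸ h𝔫M))
        exact ⟨⟨Ideal.prime_of_isPrime hMne hM.isPrime, Ideal.dvd_iff_le.2 h𝔫M⟩, hdM⟩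
      have hQM : Q ≤ M := Ideal.le_of_dvd (Finset.dvd_prod_of_mem id hMS)
      have hqM : q ∈ M := hQM hq
      have hjM : j ∈ M := by
        have := M.sub_mem hbM (M.mul_mem_left a hqM); simpa using this
      exact h1M (hjq ▸ M.add_mem hjM hqM)
  · rw [← sub_eq_zero, ← map_sub, Ideal.Quotient.eq_zero_iff_mem]
    have : a * q + j - a = -(a * j) + j := by
      have hq1 : q = 1 - j := by rw [← hjq]; ring
      rw [hq1]; ring
    rw [this]
    exact Ideal.add_mem _ (Ideal.neg_mem_iff _ |>.2 (Ideal.mul_mem_left _ a hj)) hj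

end Dedekind

variable {K : Type*} [Field K] [NumberField K]

lemma nf_prod_primes (S : Finset (Ideal (𝓞 K))) (hS : ∀ p ∈ S, Prime p) :
    normalizedFactors (S.prod id) = S.val := by
  rw [← Finset.prod_val]
  exact normalizedFactors_prod_of_prime hS

lemma prod_primes_ne_zero (S : Finset (Ideal (𝓞 K))) (hS : ∀ p ∈ S, Prime p) :
    S.prod id ≠ 0 := by
  rw [← Finset.prod_val]
  exact Multiset.prod_ne_zero_of_prime _ hS

open Classical in
lemma mu_prod_primes (S : Finset (Ideal (𝓞 K))) (hS : ∀ p ∈ S, Prime p) :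
    idealMoebius K (S.prod id) = (-1) ^ S.card := by
  by_cases htop : S.prod id = ⊤
  · have : S = ∅ := by
      by_contra h
      obtain ⟨p, hp⟩ := Finset.nonempty_iff_ne_empty.2 h
      exact (hS p hp).not_unit (isUnit_of_dvd_unit (Finset.dvd_prod_of_mem id hp)
        (Ideal.isUnit_iff.2 htop))
    subst this
    simp [idealMoebius, htop]
  · have hnz := prod_primes_ne_zero S hS
    have hsq : Squarefree (S.prod id) := by
      rw [squarefree_iff_nodup_normalizedFactors hnz, nf_prod_primes S hS]
      exact S.nodup
    rw [idealMoebius, if_neg htop, if_pos hsq, factors_eq_normalizedFactors,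
      nf_prod_primes S hS, Finset.val_toFinset]

open Classical in
lemma eq_prod_of_mu_ne_zero (I : Ideal (𝓞 K)) (hI : idealMoebius K I ≠ 0) :
    (normalizedFactors I).Nodup ∧ ((normalizedFactors I).toFinset).prod id = I := by
  by_cases htop : I = ⊤
  · subst htop
    rw [← Ideal.one_eq_top, normalizedFactors_one]
    simp
  · have hsq : Squarefree I := by
      by_contra h
      rw [idealMoebius, if_neg htop, if_neg h] at hI
      exact hI rfl
    have hnz : I ≠ 0 := fun h => not_squarefree_zero (h ▸ hsq)
    have hnd : (normalizedFactors I).Nodup :=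
      (squarefree_iff_nodup_normalizedFactors hnz).1 hsq
    refine ⟨hnd, ?_⟩
    rw [← Finset.prod_val, Multiset.toFinset_val, Multiset.dedup_eq_self.2 hnd]
    exact prod_normalizedFactors_eq_self hnz

open Classical in
theorem moebius_sum (J : Ideal (𝓞 K)) (hJ : J ≠ ⊥) (D : Finset (Ideal (𝓞 K)))
    (hD : ∀ 𝔡, 𝔡 ∈ D ↔ 𝔡 ∣ J) :
    ∑ 𝔡 ∈ D, (idealMoebius K 𝔡) = if J = ⊤ then 1 else 0 := by
  classical
  have hJ0 : J ≠ 0 := hJ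
  set P := (normalizedFactors J).toFinset with hP
  have key : ∑ 𝔡 ∈ D.filter (fun 𝔡 => idealMoebius K 𝔡 ≠ 0), idealMoebius K 𝔡
      = ∑ S ∈ P.powerset, (-1 : ℤ) ^ S.card := by
    refine Finset.sum_nbij' (i := fun 𝔡 => (normalizedFactors 𝔡).toFinset)
      (j := fun S => S.prod id) ?_ ?_ ?_ ?_ ?_
    · intro 𝔡 h𝔡
      rw [Finset.mem_filter] at h𝔡
      obtain ⟨h𝔡D, h𝔡μ⟩ := h𝔡
      rw [Finset.mem_powerset]
      intro p hp
      rw [Multiset.mem_toFinset] at hp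
      have hdvd : 𝔡 ∣ J := (hD 𝔡).1 h𝔡D
      have h𝔡0 : 𝔡 ≠ 0 := fun h => hJ0 (zero_dvd_iff.1 (h ▸ hdvd))
      rw [mem_normalizedFactors_iff h𝔡0] at hp
      rw [hP, Multiset.mem_toFinset, mem_normalizedFactors_iff hJ0]
      exact ⟨hp.1, hp.2.trans hdvd⟩
    · intro S hS
      rw [Finset.mem_powerset] at hS
      have hprime : ∀ p ∈ S, Prime p := fun p hp => by
        have := hS hp
        rw [hP, Multiset.mem_toFinset, mem_normalizedFactors_iff hJ0] at this
        exact this.1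
      rw [Finset.mem_filter]
      constructor
      · rw [hD]
        refine dvd_trans ?_ (prod_normalizedFactors_eq_self hJ0).dvd
        rw [← Finset.prod_val]
        exact Multiset.prod_dvd_prod_of_le
          (le_trans (Finset.val_le_iff.2 hS) (Multiset.dedup_le _))
      · rw [mu_prod_primes S hprime]
        positivity
    · intro 𝔡 h𝔡
      rw [Finset.mem_filter] at h𝔡
      exact (eq_prod_of_mu_ne_zero 𝔡 h𝔡.2).2
    · intro S hS
      rw [Finset.mem_powerset] at hS
      have hprime : ∀ p ∈ S, Prime p := fun p hp => by
        have := hS hp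
        rw [hP, Multiset.mem_toFinset, mem_normalizedFactors_iff hJ0] at this
        exact this.1
      rw [nf_prod_primes S hprime, Finset.val_toFinset]
    · intro 𝔡 h𝔡
      rw [Finset.mem_filter] at h𝔡
      obtain ⟨hnd, heq⟩ := eq_prod_of_mu_ne_zero 𝔡 h𝔡.2
      have hdvd : 𝔡 ∣ J := (hD 𝔡).1 h𝔡.1
      have h𝔡0 : 𝔡 ≠ 0 := fun h => hJ0 (zero_dvd_iff.1 (h ▸ hdvd))
      have hprime : ∀ p ∈ (normalizedFactors 𝔡).toFinset, Prime p := fun p hp => by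
        rw [Multiset.mem_toFinset, mem_normalizedFactors_iff h𝔡0] at hp
        exact hp.1
      conv_lhs => rw [← heq]
      exact mu_prod_primes _ hprime
  rw [← Finset.sum_filter_ne_zero, key, Finset.sum_powerset_neg_one_pow_card]
  have hPJ : P = ∅ ↔ J = ⊤ := by
    constructor
    · intro h
      rw [hP, Multiset.toFinset_eq_empty] at h
      have := prod_normalizedFactors_eq_self hJ0
      rw [h, Multiset.prod_zero, Ideal.one_eq_top] at this
      exact this.symm
    · intro h
      rw [hP, h, ← Ideal.one_eq_top, normalizedFactors_one, Multiset.toFinset_zero]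
  simp only [hPJ]

end PhiAux

set_option maxHeartbeats 10000000 in
theorem PhiAux.recursion_main (K : Type*) [Field K] [NumberField K]
    (k : ℕ) (hk : 2 ≤ k) (𝔫 𝔪 : Ideal (𝓞 K)) (h𝔫 : 𝔫 ≠ ⊥) (h𝔪 : 𝔪 ∣ 𝔫) :
    (phiPairIdeal K k 𝔫 𝔪 : ℚ) =
      (Nat.card ((𝓞 K ⧸ 𝔫)ˣ) : ℚ) *
        ∑ᶠ (𝔡 : Ideal (𝓞 K)) (_ : 𝔡 ∣ 𝔪),
          (idealMoebius K 𝔡 : ℚ) / (Nat.card ((𝓞 K ⧸ 𝔡)ˣ) : ℚ) *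
            (phiPairIdeal K (k - 1) 𝔫 𝔡 : ℚ) := by
  classical
  obtain ⟨m, rfl⟩ : ∃ m, k = m + 1 := ⟨k - 1, (Nat.succ_pred_eq_of_pos (by omega)).symm⟩
  simp only [Nat.add_sub_cancel]
  have h𝔪0 : 𝔪 ≠ ⊥ := fun h => h𝔫 (zero_dvd_iff.1 (by rw [← Ideal.zero_eq_bot] at h; exact h ▸ h𝔪))
  have h𝔫𝔪 : 𝔫 ≤ 𝔪 := Ideal.le_of_dvd h𝔪
  letI : Fintype (𝓞 K ⧸ 𝔫) := @Fintype.ofFinite _ (Ideal.finiteQuotientOfFreeOfNeBot 𝔫 h𝔫)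
  letI : Fintype ((𝓞 K ⧸ 𝔫)ˣ) := Fintype.ofFinite _
  letI : Fintype {𝔡 : Ideal (𝓞 K) // 𝔡 ∣ 𝔪} := UniqueFactorizationMonoid.fintypeSubtypeDvd 𝔪 h𝔪0
  have hfin : {𝔡 : Ideal (𝓞 K) | 𝔡 ∣ 𝔪}.Finite := by
    haveI : Finite {𝔡 : Ideal (𝓞 K) // 𝔡 ∣ 𝔪} := Finite.of_fintype _
    exact Set.finite_coe_iff.mp (by exact this)
  set D : Finset (Ideal (𝓞 K)) := hfin.toFinset with hDdef
  have hmemD : ∀ 𝔡, 𝔡 ∈ D ↔ 𝔡 ∣ 𝔪 := fun 𝔡 => by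
    rw [hDdef, Set.Finite.mem_toFinset]; rfl
  have hDfacts : ∀ 𝔡 ∈ D, 𝔫 ≤ 𝔡 ∧ 𝔡 ≠ ⊥ := by
    intro 𝔡 h
    have hd𝔪 := (hmemD 𝔡).1 h
    exact ⟨le_trans h𝔫𝔪 (Ideal.le_of_dvd hd𝔪),
      fun hb => h𝔪0 (zero_dvd_iff.1 (by rw [← Ideal.zero_eq_bot] at hb; exact hb ▸ hd𝔪))⟩
  -- cast of phiPairIdeal as a sum of indicators
  have hphi : ∀ (k' : ℕ) (𝔡 : Ideal (𝓞 K)),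
      (phiPairIdeal K k' 𝔫 𝔡 : ℚ) = ∑ v : Fin k' → (𝓞 K ⧸ 𝔫)ˣ,
        (if (∀ y : 𝓞 K, Ideal.Quotient.mk 𝔫 y = ∑ i, ((v i : 𝓞 K ⧸ 𝔫)) →
            IsUnit (Ideal.Quotient.mk 𝔡 y)) then (1:ℚ) else 0) := by
    intro k' 𝔡
    rw [Finset.sum_boole, phiPairIdeal, Nat.card_eq_fintype_card, Fintype.card_subtype]
  -- lifting of conditions to a single representative
  have hcu : ∀ (𝔡 : Ideal (𝓞 K)), 𝔫 ≤ 𝔡 → ∀ y : 𝓞 K,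
      ((∀ y' : 𝓞 K, Ideal.Quotient.mk 𝔫 y' = Ideal.Quotient.mk 𝔫 y →
          IsUnit (Ideal.Quotient.mk 𝔡 y')) ↔ IsUnit (Ideal.Quotient.mk 𝔡 y)) := by
    intro 𝔡 h y
    constructor
    · exact fun h' => h' y rfl
    · intro hy y' hy'
      rwa [Ideal.Quotient.eq.2 (h (Ideal.Quotient.eq.1 hy'))]
  have hc0 : ∀ (𝔡 : Ideal (𝓞 K)), 𝔫 ≤ 𝔡 → ∀ y : 𝓞 K,
      ((∀ y' : 𝓞 K, Ideal.Quotient.mk 𝔫 y' = Ideal.Quotient.mk 𝔫 y →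
          Ideal.Quotient.mk 𝔡 y' = 0) ↔ Ideal.Quotient.mk 𝔡 y = 0) := by
    intro 𝔡 h y
    constructor
    · exact fun h' => h' y rfl
    · intro hy y' hy'
      rwa [Ideal.Quotient.eq.2 (h (Ideal.Quotient.eq.1 hy'))]
  -- pointwise Moebius identity
  have hmob : ∀ x : 𝓞 K ⧸ 𝔫,
      (if (∀ y : 𝓞 K, Ideal.Quotient.mk 𝔫 y = x → IsUnit (Ideal.Quotient.mk 𝔪 y))
          then (1:ℚ) else 0)
        = ∑ 𝔡 ∈ D, (idealMoebius K 𝔡 : ℚ) *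
            (if (∀ y : 𝓞 K, Ideal.Quotient.mk 𝔫 y = x → Ideal.Quotient.mk 𝔡 y = 0)
              then (1:ℚ) else 0) := by
    intro x
    obtain ⟨y, rfl⟩ := Ideal.Quotient.mk_surjective x
    rw [if_congr (hcu 𝔪 h𝔫𝔪 y) rfl rfl]
    have hstep : ∀ 𝔡 ∈ D, (idealMoebius K 𝔡 : ℚ) *
        (if (∀ y' : 𝓞 K, Ideal.Quotient.mk 𝔫 y' = Ideal.Quotient.mk 𝔫 y →
            Ideal.Quotient.mk 𝔡 y' = 0) then (1:ℚ) else 0)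
        = (idealMoebius K 𝔡 : ℚ) * (if y ∈ 𝔡 then (1:ℚ) else 0) := by
      intro 𝔡 h𝔡
      rw [if_congr ((hc0 𝔡 (hDfacts 𝔡 h𝔡).1 y).trans (Ideal.Quotient.eq_zero_iff_mem)) rfl rfl]
    rw [Finset.sum_congr rfl hstep]
    set 𝔤 : Ideal (𝓞 K) := 𝔪 ⊔ Ideal.span {y} with h𝔤def
    have h𝔤0 : 𝔤 ≠ ⊥ := fun hb => h𝔪0 (le_bot_iff.1 (hb ▸ le_sup_left))
    have hmemD𝔤 : ∀ 𝔡, 𝔡 ∈ D.filter (fun 𝔡 => y ∈ 𝔡) ↔ 𝔡 ∣ 𝔤 := by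
      intro 𝔡
      rw [Finset.mem_filter, hmemD]
      constructor
      · rintro ⟨hd𝔪, hy𝔡⟩
        rw [Ideal.dvd_iff_le]
        exact sup_le (Ideal.le_of_dvd hd𝔪) ((Ideal.span_le).2 (by simpa using hy𝔡))
      · intro hdvd
        have hle : 𝔤 ≤ 𝔡 := Ideal.le_of_dvd hdvd
        refine ⟨Ideal.dvd_iff_le.2 (le_trans le_sup_left hle), ?_⟩
        exact hle ((le_sup_right : Ideal.span {y} ≤ 𝔤) (Ideal.subset_span rfl))
    have hz := PhiAux.moebius_sum 𝔤 h𝔤0 (D.filter (fun 𝔡 => y ∈ 𝔡)) hmemD𝔤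
    calc (if IsUnit (Ideal.Quotient.mk 𝔪 y) then (1:ℚ) else 0)
        = ((if 𝔤 = ⊤ then (1:ℤ) else 0 : ℤ) : ℚ) := by
          rw [if_congr (PhiAux.isUnit_mk_iff 𝔪 y) rfl rfl]
          split <;> simp
      _ = ((∑ 𝔡 ∈ D.filter (fun 𝔡 => y ∈ 𝔡), idealMoebius K 𝔡 : ℤ) : ℚ) := by rw [hz]
      _ = ∑ 𝔡 ∈ D, (idealMoebius K 𝔡 : ℚ) * (if y ∈ 𝔡 then (1:ℚ) else 0) := by
          push_cast
          rw [Finset.sum_filter]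
          exact Finset.sum_congr rfl (fun 𝔡 _ => by split <;> simp)
  -- surjectivity of the induced map on units
  have hsurj : ∀ (𝔡 : Ideal (𝓞 K)) (h : 𝔫 ≤ 𝔡),
      Function.Surjective (Units.map (Ideal.Quotient.factor h).toMonoidHom) := by
    intro 𝔡 h w
    obtain ⟨a, ha⟩ := Ideal.Quotient.mk_surjective (w : 𝓞 K ⧸ 𝔡)
    have hau : IsUnit (Ideal.Quotient.mk 𝔡 a) := ha ▸ w.isUnit
    obtain ⟨b, hb1, hb2⟩ := PhiAux.exists_unit_lift 𝔫 𝔡 h𝔫 h a hau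
    refine ⟨hb1.unit, Units.ext ?_⟩
    show (Ideal.Quotient.factor h) ↑hb1.unit = ↑w
    rw [IsUnit.unit_spec, Ideal.Quotient.factor_mk, hb2, ha]
  -- fiber counting
  have hfiber : ∀ 𝔡 ∈ D, ∀ s : 𝓞 K ⧸ 𝔫,
      (∑ u : (𝓞 K ⧸ 𝔫)ˣ, if (∀ y : 𝓞 K, Ideal.Quotient.mk 𝔫 y = ↑u + s →
          Ideal.Quotient.mk 𝔡 y = 0) then (1:ℚ) else 0)
        = (Nat.card ((𝓞 K ⧸ 𝔫)ˣ) : ℚ) / (Nat.card ((𝓞 K ⧸ 𝔡)ˣ) : ℚ) *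
          (if (∀ y : 𝓞 K, Ideal.Quotient.mk 𝔫 y = s → IsUnit (Ideal.Quotient.mk 𝔡 y))
            then (1:ℚ) else 0) := by
    intro 𝔡 h𝔡D s
    obtain ⟨h𝔫𝔡, h𝔡0⟩ := hDfacts 𝔡 h𝔡D
    letI : Fintype (𝓞 K ⧸ 𝔡) := @Fintype.ofFinite _ (Ideal.finiteQuotientOfFreeOfNeBot 𝔡 h𝔡0)
    set f : 𝓞 K ⧸ 𝔫 →+* 𝓞 K ⧸ 𝔡 := Ideal.Quotient.factor h𝔫𝔡 with hfdef
    set g : (𝓞 K ⧸ 𝔫)ˣ →* (𝓞 K ⧸ 𝔡)ˣ := Units.map f.toMonoidHom with hgdef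
    obtain ⟨ys, hys⟩ := Ideal.Quotient.mk_surjective s
    have hfs : f s = Ideal.Quotient.mk 𝔡 ys := by
      rw [← hys, hfdef, Ideal.Quotient.factor_mk]
    have hcond : ∀ u : (𝓞 K ⧸ 𝔫)ˣ,
        ((∀ y : 𝓞 K, Ideal.Quotient.mk 𝔫 y = ↑u + s → Ideal.Quotient.mk 𝔡 y = 0)
          ↔ ((g u : 𝓞 K ⧸ 𝔡) = f (-s))) := by
      intro u
      obtain ⟨yu, hyu⟩ := Ideal.Quotient.mk_surjective (↑u : 𝓞 K ⧸ 𝔫)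
      have h1 : (↑u : 𝓞 K ⧸ 𝔫) + s = Ideal.Quotient.mk 𝔫 (yu + ys) := by
        rw [map_add, hyu, hys]
      have h2 : (g u : 𝓞 K ⧸ 𝔡) = Ideal.Quotient.mk 𝔡 yu := by
        rw [hgdef, Units.coe_map]
        show f ↑u = _
        rw [← hyu, hfdef, Ideal.Quotient.factor_mk]
      rw [h1, hc0 𝔡 h𝔫𝔡 (yu + ys), h2, map_neg, hfs, map_add]
      constructor
      · exact fun h => eq_neg_of_add_eq_zero_left h
      · intro h; rw [h]; exact neg_add_cancel _
    have hRHS : ((∀ y : 𝓞 K, Ideal.Quotient.mk 𝔫 y = s → IsUnit (Ideal.Quotient.mk 𝔡 y))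
        ↔ IsUnit (f (-s))) := by
      rw [map_neg, IsUnit.neg_iff _, hfs, ← hys]
      exact hcu 𝔡 h𝔫𝔡 ys
    by_cases ht : IsUnit (f (-s))
    · obtain ⟨w, hw⟩ := ht
      have hgw : ∀ u, (((g u : 𝓞 K ⧸ 𝔡) = f (-s)) ↔ g u = w) := by
        intro u
        rw [← hw]
        exact ⟨fun h => Units.ext h, fun h => by rw [h]⟩
      have hsum : (∑ u : (𝓞 K ⧸ 𝔫)ˣ, if (∀ y : 𝓞 K, Ideal.Quotient.mk 𝔫 y = ↑u + s →
          Ideal.Quotient.mk 𝔡 y = 0) then (1:ℚ) else 0)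
          = ((Finset.univ.filter (fun u => g u = w)).card : ℚ) := by
        rw [← Finset.sum_boole]
        exact Finset.sum_congr rfl (fun u _ => if_congr ((hcond u).trans (hgw u)) rfl rfl)
      rw [hsum, if_pos (hRHS.2 ⟨w, hw⟩), mul_one]
      have hcard := PhiAux.card_fiber_mul g (hsurj 𝔡 h𝔫𝔡) w
      have hfc : (Finset.univ.filter (fun u => g u = w)).card = Nat.card {u // g u = w} := by
        rw [Nat.card_eq_fintype_card, Fintype.card_subtype]
      have hpos : (Nat.card ((𝓞 K ⧸ 𝔡)ˣ) : ℚ) ≠ 0 := by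
        have : 0 < Nat.card ((𝓞 K ⧸ 𝔡)ˣ) := Nat.card_pos
        exact_mod_cast this.ne'
      rw [hfc, eq_div_iff hpos]
      exact_mod_cast hcard
    · have h0 : ∀ u : (𝓞 K ⧸ 𝔫)ˣ, ¬ ((g u : 𝓞 K ⧸ 𝔡) = f (-s)) :=
        fun u h => ht (h ▸ (g u).isUnit)
      rw [if_neg (fun hcc => ht (hRHS.1 hcc)), mul_zero]
      exact Finset.sum_eq_zero (fun u _ => by
        rw [if_neg (fun hcc => h0 u ((hcond u).1 hcc))])
  -- split the (m+1)-fold sum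
  have hsplit : (phiPairIdeal K (m+1) 𝔫 𝔪 : ℚ)
      = ∑ w : Fin m → (𝓞 K ⧸ 𝔫)ˣ, ∑ u : (𝓞 K ⧸ 𝔫)ˣ,
          (if (∀ y : 𝓞 K, Ideal.Quotient.mk 𝔫 y = ↑u + ∑ i, ((w i : 𝓞 K ⧸ 𝔫)) →
              IsUnit (Ideal.Quotient.mk 𝔪 y)) then (1:ℚ) else 0) := by
    rw [hphi (m+1) 𝔪]
    rw [Fintype.sum_equiv
      ({ toFun := fun v => (v 0, fun i => v i.succ)
         invFun := fun p => Fin.cons p.1 p.2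
         left_inv := fun v => funext fun i => Fin.cases rfl (fun j => rfl) i
         right_inv := fun p => rfl } :
        (Fin (m+1) → (𝓞 K ⧸ 𝔫)ˣ) ≃ ((𝓞 K ⧸ 𝔫)ˣ × (Fin m → (𝓞 K ⧸ 𝔫)ˣ)))
      _ (fun p => if (∀ y : 𝓞 K, Ideal.Quotient.mk 𝔫 y = ↑p.1 + ∑ i, ((p.2 i : 𝓞 K ⧸ 𝔫)) →
          IsUnit (Ideal.Quotient.mk 𝔪 y)) then (1:ℚ) else 0)
      (fun v => by
        have hs : (∑ i, ((v i : 𝓞 K ⧸ 𝔫))) = ↑(v 0) + ∑ i : Fin m, ((v i.succ : 𝓞 K ⧸ 𝔫)) :=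
          Fin.sum_univ_succ _
        exact if_congr (by rw [hs]; exact Iff.rfl) rfl rfl)]
    rw [Fintype.sum_prod_type]
    exact Finset.sum_comm
  rw [hsplit]
  -- apply the Moebius identity and fiber counts
  have hinner : ∀ w : Fin m → (𝓞 K ⧸ 𝔫)ˣ,
      (∑ u : (𝓞 K ⧸ 𝔫)ˣ, if (∀ y : 𝓞 K, Ideal.Quotient.mk 𝔫 y = ↑u + ∑ i, ((w i : 𝓞 K ⧸ 𝔫)) →
          IsUnit (Ideal.Quotient.mk 𝔪 y)) then (1:ℚ) else 0)
      = ∑ 𝔡 ∈ D, ((idealMoebius K 𝔡 : ℚ) *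
          ((Nat.card ((𝓞 K ⧸ 𝔫)ˣ) : ℚ) / (Nat.card ((𝓞 K ⧸ 𝔡)ˣ) : ℚ))) *
          (if (∀ y : 𝓞 K, Ideal.Quotient.mk 𝔫 y = ∑ i, ((w i : 𝓞 K ⧸ 𝔫)) →
            IsUnit (Ideal.Quotient.mk 𝔡 y)) then (1:ℚ) else 0) := by
    intro w
    rw [Finset.sum_congr rfl (fun (u : (𝓞 K ⧸ 𝔫)ˣ) _ => hmob ((u : 𝓞 K ⧸ 𝔫) + ∑ i, ((w i : 𝓞 K ⧸ 𝔫))))]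
    rw [Finset.sum_comm]
    refine Finset.sum_congr rfl (fun 𝔡 h𝔡 => ?_)
    rw [← Finset.mul_sum, hfiber 𝔡 h𝔡 (∑ i, ((w i : 𝓞 K ⧸ 𝔫)))]
    ring
  rw [Finset.sum_congr rfl (fun w (_ : w ∈ Finset.univ) => hinner w), Finset.sum_comm]
  -- convert the finsum on the RHS to a Finset sum
  have hfinsum : (∑ᶠ (𝔡 : Ideal (𝓞 K)) (_ : 𝔡 ∣ 𝔪),
        (idealMoebius K 𝔡 : ℚ) / (Nat.card ((𝓞 K ⧸ 𝔡)ˣ) : ℚ) *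
          (phiPairIdeal K m 𝔫 𝔡 : ℚ))
      = ∑ 𝔡 ∈ D, (idealMoebius K 𝔡 : ℚ) / (Nat.card ((𝓞 K ⧸ 𝔡)ˣ) : ℚ) *
          (phiPairIdeal K m 𝔫 𝔡 : ℚ) := by
    rw [← finsum_mem_coe_finset]
    exact finsum_congr fun 𝔡 => finsum_congr_Prop
      (by rw [eq_iff_iff, Finset.mem_coe, hmemD 𝔡]) (fun _ => rfl)
  rw [hfinsum, Finset.mul_sum]
  refine Finset.sum_congr rfl (fun 𝔡 h𝔡 => ?_)
  rw [← Finset.mul_sum, ← hphi m 𝔡]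
  ring

/-- Recursion: for `k ≥ 2` and `𝔪 ∣ 𝔫`,
`φ_k(𝔫, 𝔪) = φ(𝔫) · ∑_{𝔡 ∣ 𝔪} μ(𝔡)/φ(𝔡) · φ_{k−1}(𝔫, 𝔡)`. -/
theorem phiPairIdeal_recursion (K : Type*) [Field K] [NumberField K]
    (k : ℕ) (hk : 2 ≤ k) (𝔫 𝔪 : Ideal (𝓞 K)) (h𝔫 : 𝔫 ≠ ⊥) (h𝔪 : 𝔪 ∣ 𝔫) :
    (phiPairIdeal K k 𝔫 𝔪 : ℚ) =
      (Nat.card ((𝓞 K ⧸ 𝔫)ˣ) : ℚ) *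
        ∑ᶠ (𝔡 : Ideal (𝓞 K)) (_ : 𝔡 ∣ 𝔪),
          (idealMoebius K 𝔡 : ℚ) / (Nat.card ((𝓞 K ⧸ 𝔡)ˣ) : ℚ) *
            (phiPairIdeal K (k - 1) 𝔫 𝔡 : ℚ) :=
  PhiAux.recursion_main K k hk 𝔫 𝔪 h𝔫 h𝔪
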